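/- arXiv:2007.13572 — 6 statements merged into one kernel-verified Lean document; each statement's English description precedes it below -/
import Mathlib

section
/- Let E₁, E₂ : H → ℝ with E₂ Fréchet differentiable, let E = E₁ + E₂, let k > 0, and let Λ ≥ 0 be such that the quadratic upper bound holds. Assume kΛ ≤ 1. Let u₀ ∈ H and suppose u₊ is a global minimizer over H of the functional u ↦ E₁(u) + L₂(u,u₀) + (1/(2k))‖u − u₀‖². Then E(u₊) ≤ E(u₀). -/
/-- One step of the basic semi-implicit scheme dissipates the energy
`E = E₁ + E₂` provided `kΛ ≤ 1`, where `Λ` gives the quadratic upper bound for `E₂`.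
Here `g = ∇E₂`, `L₂(u,p) = E₂(p) + ⟨g p, u - p⟩`, and `unew` is a global minimizer of
`u ↦ E₁(u) + L₂(u,u₀) + (1/(2k))‖u − u₀‖²`. -/
theorem stmt_3 {H : Type*} [NormedAddCommGroup H] [InnerProductSpace ℝ H] [CompleteSpace H]
    (E₁ E₂ : H → ℝ) (g : H → H) (hgrad : ∀ x, HasGradientAt E₂ (g x) x)
    (k Λ : ℝ) (hk : 0 < k) (hΛ : 0 ≤ Λ)
    (hquad : ∀ u p : H, E₂ u ≤ E₂ p + (inner ℝ (g p) (u - p) : ℝ) + Λ / 2 * ‖u - p‖ ^ 2)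
    (hkΛ : k * Λ ≤ 1) (u₀ unew : H)
    (hmin : ∀ u : H,
      E₁ unew + (E₂ u₀ + (inner ℝ (g u₀) (unew - u₀) : ℝ)) + 1 / (2 * k) * ‖unew - u₀‖ ^ 2 ≤
        E₁ u + (E₂ u₀ + (inner ℝ (g u₀) (u - u₀) : ℝ)) + 1 / (2 * k) * ‖u - u₀‖ ^ 2) :
    E₁ unew + E₂ unew ≤ E₁ u₀ + E₂ u₀ := by
  have h1 := hmin u₀
  simp at h1
  have h2 := hquad unew u₀
  have hs : (0:ℝ) ≤ ‖unew - u₀‖ ^ 2 := by positivity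
  have h3 : Λ ≤ k⁻¹ := by
    rw [← one_div, le_div_iff₀ hk]; linarith [mul_comm k Λ]
  nlinarith [mul_le_mul_of_nonneg_right h3 hs]
end

section
/- Let E₁, E₂ : H → ℝ with E₂ Fréchet differentiable, E = E₁ + E₂, k > 0, and Λ ≥ 0 such that the quadratic upper bound holds. Let θ_{2,0}, θ_{2,1}, γ_{1,0}, γ_{2,0}, γ_{2,1} be real numbers satisfying: θ_{2,0}, θ_{2,1} ≥ 0; θ_{2,0} + θ_{2,1} = 1; γ_{2,0} + γ_{2,1} − kΛθ_{2,0} − kΛθ_{2,1} > 0; and γ_{1,0} − kΛ − (γ_{2,0} − kΛθ_{2,0})²/(γ_{2,0} + γ_{2,1} − kΛθ_{2,0} − kΛθ_{2,1}) ≥ 0. Let uₙ ∈ H, let U₁ be a global minimizer of u ↦ E₁(u) + L₂(u,uₙ) + (γ_{1,0}/(2k))‖u − uₙ‖², and let u_{n+1} be a global minimizer of u ↦ E₁(u) + θ_{2,1}L₂(u,U₁) + θ_{2,0}L₂(u,uₙ) + (γ_{2,0}/(2k))‖u − uₙ‖² + (γ_{2,1}/(2k))‖u − U₁‖². Then E(u_{n+1})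 ≤ E(uₙ). -/
lemma aux_quad {H : Type*} [NormedAddCommGroup H] [InnerProductSpace ℝ H]
    (x y : H) (A B C : ℝ) (hAB : 0 < A + B) (h : A ^ 2 ≤ (A + B) * (C + A)) :
    0 ≤ A * ‖x‖ ^ 2 + B * ‖y‖ ^ 2 + C * ‖x - y‖ ^ 2 := by
  have h1 : ‖x - y‖ ^ 2 = ‖x‖ ^ 2 - 2 * (inner ℝ x y : ℝ) + ‖y‖ ^ 2 := norm_sub_sq_real x y
  have h2 : (0:ℝ) ≤ ‖A • x + B • y‖ ^ 2 := sq_nonneg _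
  have h3 : ‖A • x + B • y‖ ^ 2
      = A ^ 2 * ‖x‖ ^ 2 + 2 * (A * B) * (inner ℝ x y : ℝ) + B ^ 2 * ‖y‖ ^ 2 := by
    rw [norm_add_sq_real, norm_smul, norm_smul, real_inner_smul_left, real_inner_smul_right]
    simp [mul_pow]
    ring
  have h4 : (0:ℝ) ≤ ‖x - y‖ ^ 2 := sq_nonneg _
  have key : (A + B) * (A * ‖x‖ ^ 2 + B * ‖y‖ ^ 2 + C * ‖x - y‖ ^ 2)
      = ‖A • x + B • y‖ ^ 2 + ((A + B) * (C + A) - A ^ 2) * ‖x - y‖ ^ 2 := by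
    rw [h3, h1]
    ring
  have hT : 0 ≤ (A + B) * (A * ‖x‖ ^ 2 + B * ‖y‖ ^ 2 + C * ‖x - y‖ ^ 2) := by
    rw [key]
    have := mul_nonneg (sub_nonneg.2 h) h4
    linarith
  have := div_nonneg hT hAB.le
  rwa [mul_div_cancel_left₀ _ (ne_of_gt hAB)] at this

/-- energy stability of the two-stage scheme (2.9)–(2.10) under the
conditions (2.11) on the coefficients. Here `g = ∇E₂` and
`L₂(u,p) = E₂(p) + ⟨g p, u − p⟩`. -/
theorem stmt_6 {H : Type*} [NormedAddCommGroup H] [InnerProductSpace ℝ H] [CompleteSpace H]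
    (E₁ E₂ : H → ℝ) (g : H → H) (hgrad : ∀ x, HasGradientAt E₂ (g x) x)
    (k Λ : ℝ) (hk : 0 < k) (hΛ : 0 ≤ Λ)
    (hquad : ∀ u p : H, E₂ u ≤ E₂ p + (inner ℝ (g p) (u - p) : ℝ) + Λ / 2 * ‖u - p‖ ^ 2)
    (θ₂₀ θ₂₁ γ₁₀ γ₂₀ γ₂₁ : ℝ)
    (hθ₀ : 0 ≤ θ₂₀) (hθ₁ : 0 ≤ θ₂₁) (hθsum : θ₂₀ + θ₂₁ = 1)
    (hden : 0 < γ₂₀ + γ₂₁ - k * Λ * θ₂₀ - k * Λ * θ₂₁)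
    (hγ₁₀ : 0 ≤ γ₁₀ - k * Λ -
      (γ₂₀ - k * Λ * θ₂₀) ^ 2 / (γ₂₀ + γ₂₁ - k * Λ * θ₂₀ - k * Λ * θ₂₁))
    (uₙ U₁ unew : H)
    (hU₁ : ∀ u : H,
      E₁ U₁ + (E₂ uₙ + (inner ℝ (g uₙ) (U₁ - uₙ) : ℝ)) + γ₁₀ / (2 * k) * ‖U₁ - uₙ‖ ^ 2 ≤
        E₁ u + (E₂ uₙ + (inner ℝ (g uₙ) (u - uₙ) : ℝ)) + γ₁₀ / (2 * k) * ‖u - uₙ‖ ^ 2)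
    (hunew : ∀ u : H,
      E₁ unew + θ₂₁ * (E₂ U₁ + (inner ℝ (g U₁) (unew - U₁) : ℝ))
          + θ₂₀ * (E₂ uₙ + (inner ℝ (g uₙ) (unew - uₙ) : ℝ))
          + γ₂₀ / (2 * k) * ‖unew - uₙ‖ ^ 2 + γ₂₁ / (2 * k) * ‖unew - U₁‖ ^ 2 ≤
        E₁ u + θ₂₁ * (E₂ U₁ + (inner ℝ (g U₁) (u - U₁) : ℝ))
          + θ₂₀ * (E₂ uₙ + (inner ℝ (g uₙ) (u - uₙ) : ℝ))
          + γ₂₀ / (2 * k) * ‖u - uₙ‖ ^ 2 + γ₂₁ / (2 * k) * ‖u - U₁‖ ^ 2) :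
    E₁ unew + E₂ unew ≤ E₁ uₙ + E₂ uₙ := by
  have hk2 : (0:ℝ) < 2 * k := by linarith
  have hk2' : (2 * k : ℝ) ≠ 0 := ne_of_gt hk2
  -- coefficients
  set A : ℝ := γ₂₀ / (2 * k) - Λ / 2 * θ₂₀ with hAdef
  set B : ℝ := γ₂₁ / (2 * k) - Λ / 2 * θ₂₁ with hBdef
  set C : ℝ := γ₁₀ / (2 * k) - γ₂₀ / (2 * k) - Λ / 2 * θ₂₁ with hCdef
  set D : ℝ := γ₂₀ + γ₂₁ - k * Λ * θ₂₀ - k * Λ * θ₂₁ with hDdef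
  have hABeq : A + B = D / (2 * k) := by
    rw [hAdef, hBdef, hDdef]; field_simp; ring
  have hCAeq : C + A = (γ₁₀ - k * Λ) / (2 * k) := by
    have h1 : Λ / 2 * θ₂₀ + Λ / 2 * θ₂₁ = Λ / 2 := by
      rw [← mul_add, hθsum, mul_one]
    have h2 : C + A = γ₁₀ / (2 * k) - Λ / 2 := by
      rw [hCdef, hAdef]; linarith
    rw [h2]
    field_simp
  have hAB : 0 < A + B := by rw [hABeq]; exact div_pos hden hk2
  have hnum : (γ₂₀ - k * Λ * θ₂₀) ^ 2 ≤ D * (γ₁₀ - k * Λ) := by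
    have := hγ₁₀
    rw [sub_nonneg, ← sub_nonneg] at this
    have h2 : (γ₂₀ - k * Λ * θ₂₀) ^ 2 / D ≤ γ₁₀ - k * Λ := by linarith
    rw [div_le_iff₀ hden] at h2
    linarith [h2]
  have hAeq : A = (γ₂₀ - k * Λ * θ₂₀) / (2 * k) := by
    rw [hAdef]; field_simp
  have hdisc : A ^ 2 ≤ (A + B) * (C + A) := by
    rw [hABeq, hCAeq, hAeq, div_pow, div_mul_div_comm]
    have e : (2 * k) * (2 * k) = (2 * k) ^ 2 := by ring
    rw [e]
    exact (div_le_div_iff_of_pos_right (by positivity)).2 hnum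
  have hxy : (unew - uₙ) - (unew - U₁) = U₁ - uₙ := by abel
  have key := aux_quad (unew - uₙ) (unew - U₁) A B C hAB hdisc
  rw [hxy] at key
  -- the four basic inequalities
  have hA := hU₁ uₙ
  simp only [sub_self, inner_zero_right, norm_zero] at hA
  have hB' := hunew U₁
  simp only [sub_self, inner_zero_right, norm_zero] at hB'
  have q1 := hquad unew U₁
  have q2 := hquad unew uₙ
  have q3 := hquad U₁ uₙ
  have wq1 := mul_le_mul_of_nonneg_left q1 hθ₁
  have wq2 := mul_le_mul_of_nonneg_left q2 hθ₀
  have wq3 := mul_le_mul_of_nonneg_left q3 hθ₁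
  have id1 : θ₂₁ * E₂ unew + θ₂₀ * E₂ unew = E₂ unew := by
    rw [← add_mul, add_comm θ₂₁ θ₂₀, hθsum, one_mul]
  have id2 : θ₂₀ * E₂ uₙ + θ₂₁ * E₂ uₙ = E₂ uₙ := by
    rw [← add_mul, hθsum, one_mul]
  have id3 : θ₂₀ * (inner ℝ (g uₙ) (U₁ - uₙ) : ℝ) + θ₂₁ * (inner ℝ (g uₙ) (U₁ - uₙ) : ℝ)
      = (inner ℝ (g uₙ) (U₁ - uₙ) : ℝ) := by
    rw [← add_mul, hθsum, one_mul]
  rw [hAdef, hBdef, hCdef] at key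
  linarith [key, hA, hB', wq1, wq2, wq3, id1, id2, id3]
end

section
/- Let M ≥ 1 and let a_{m,i} ∈ ℝ be given for 1 ≤ m ≤ M, 0 ≤ i ≤ m−1. Define γ̃_{m,i} and S̃_{j,m} by the downward recursion γ̃_{m,i} = a_{m,i} − Σ_{j=m+1}^{M} γ̃_{j,i}(S̃_{j,m}/S̃_{j,j}) with S̃_{j,m} = Σ_{i=0}^{m−1} γ̃_{j,i}, and assume S̃_{j,j} ≠ 0 for all 1 ≤ j ≤ M. Then for every 1 ≤ m ≤ M: Σ_{j=m}^{M} S̃_{j,m}²/S̃_{j,j} = Σ_{i=0}^{m−1} a_{m,i}. -/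
/-- for the auxiliary quantities defined by the downward recursion
`γ̃ₘᵢ = aₘᵢ − Σ_{j=m+1}^M γ̃ⱼᵢ (S̃ⱼₘ/S̃ⱼⱼ)`, `S̃ⱼₘ = Σ_{i<m} γ̃ⱼᵢ`, with `S̃ⱼⱼ ≠ 0`,
one has `Σ_{j=m}^M S̃ⱼₘ²/S̃ⱼⱼ = Σ_{i<m} aₘᵢ` for all `1 ≤ m ≤ M`. -/
theorem stmt_8 (M : ℕ) (hM : 1 ≤ M) (a γt St : ℕ → ℕ → ℝ)
    (hSt : ∀ j m : ℕ, St j m = ∑ i ∈ Finset.range m, γt j i)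
    (hrec : ∀ m i : ℕ, 1 ≤ m → m ≤ M → i < m →
      γt m i = a m i - ∑ j ∈ Finset.Icc (m + 1) M, γt j i * (St j m / St j j))
    (hSjj : ∀ j : ℕ, 1 ≤ j → j ≤ M → St j j ≠ 0) :
    ∀ m : ℕ, 1 ≤ m → m ≤ M →
      ∑ j ∈ Finset.Icc m M, St j m ^ 2 / St j j = ∑ i ∈ Finset.range m, a m i := by
  intro m hm1 hmM
  -- sum the recursion over i < m
  have key : St m m = (∑ i ∈ Finset.range m, a m i)
      - ∑ j ∈ Finset.Icc (m + 1) M, St j m ^ 2 / St j j := by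
    rw [hSt]
    have : ∀ i ∈ Finset.range m,
        γt m i = a m i - ∑ j ∈ Finset.Icc (m + 1) M, γt j i * (St j m / St j j) := by
      intro i hi
      exact hrec m i hm1 hmM (Finset.mem_range.mp hi)
    rw [Finset.sum_congr rfl this, Finset.sum_sub_distrib]
    congr 1
    rw [Finset.sum_comm]
    refine Finset.sum_congr rfl fun j hj => ?_
    rw [← Finset.sum_mul, ← hSt, sq, mul_div_assoc]
  have hins : Finset.Icc m M = insert m (Finset.Icc (m + 1) M) := by
    rw [Finset.Icc_add_one_left_eq_Ioc, Finset.Ioc_insert_left hmM]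
  have hnot : m ∉ Finset.Icc (m + 1) M := by simp
  rw [hins, Finset.sum_insert hnot]
  have hmm : St m m ^ 2 / St m m = St m m := by
    rw [sq, mul_div_assoc, div_self (hSjj m hm1 hmM), mul_one]
  rw [hmm, key]
  ring
end

section
/- (Lemma 2.2 of the paper.) Let E₁, E₂ : H → ℝ with E₂ Fréchet differentiable, let k > 0 and Λ ≥ 0, let γ_{m,i}, θ_{m,i} be scheme coefficients with auxiliary quantities γ̃_{m,i}, S̃_{j,m} as defined by the downward recursion, and assume S̃_{j,j} ≠ 0 for all j and S̃_{j,m} ≠ 0 for all j ≥ m. Assume also Σ_{i=0}^{m−1} θ_{m,i} = 1. Then for any fixed 1 ≤ m ≤ M and fixed U₀,…,U_{m−1} ∈ H there is a constant c ∈ ℝ (independent of u) such that for all u ∈ H: E₁(u) + Σ_{i=0}^{m−1} θ_{m,i} L₂(u,U_i) + Σ_{i=0}^{m−1} (γ_{m,i}/(2k))‖u − U_i‖² = E₁(u) + Σ_{i=0}^{m−1} θ_{m,i}[L₂(u,U_i) + (Λ/2)‖u − U_i‖²] + (1/(2k)) Σ_{j=m}^{M} (S̃_{j,m}²/S̃_{j,j})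 ‖u − Σ_{i=0}^{m−1} (γ̃_{j,i}/S̃_{j,m}) U_i‖² + c. In particular the two functionals have the same minimizers. -/
/-- The stage functional of scheme (2.1):
`u ↦ E₁(u) + Σ_{i<m} θₘᵢ L₂(u,Uᵢ) + Σ_{i<m} (γₘᵢ/(2k))‖u − Uᵢ‖²`,
with `L₂(u,p) = E₂(p) + ⟨g p, u − p⟩` where `g = ∇E₂`. -/
noncomputable def stageFunc {H : Type*} [NormedAddCommGroup H] [InnerProductSpace ℝ H]
    (E₁ E₂ : H → ℝ) (g : H → H) (k : ℝ) (θ γ : ℕ → ℕ → ℝ) (m : ℕ) (U : ℕ → H) (u : H) : ℝ :=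
  E₁ u + ∑ i ∈ Finset.range m, θ m i * (E₂ (U i) + (inner ℝ (g (U i)) (u - U i) : ℝ))
    + ∑ i ∈ Finset.range m, γ m i / (2 * k) * ‖u - U i‖ ^ 2

/-- The rewritten stage functional appearing in Lemma 2.2, in terms of the auxiliary
quantities `γ̃ = γt` and `S̃ = St`. -/
noncomputable def stageFuncAux {H : Type*} [NormedAddCommGroup H] [InnerProductSpace ℝ H]
    (E₁ E₂ : H → ℝ) (g : H → H) (k Λ : ℝ) (θ γt St : ℕ → ℕ → ℝ) (M m : ℕ)
    (U : ℕ → H) (u : H) : ℝ :=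
  E₁ u + ∑ i ∈ Finset.range m,
      θ m i * ((E₂ (U i) + (inner ℝ (g (U i)) (u - U i) : ℝ)) + Λ / 2 * ‖u - U i‖ ^ 2)
    + 1 / (2 * k) * ∑ j ∈ Finset.Icc m M,
        St j m ^ 2 / St j j * ‖u - ∑ i ∈ Finset.range m, (γt j i / St j m) • U i‖ ^ 2

/-- Expansion of a weighted sum of squared distances. -/
lemma sum_quad {H : Type*} [NormedAddCommGroup H] [InnerProductSpace ℝ H]
    {ι : Type*} (s : Finset ι) (a : ι → ℝ) (P : ι → H) (u : H) :
    ∑ i ∈ s, a i * ‖u - P i‖ ^ 2 =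
      (∑ i ∈ s, a i) * ‖u‖ ^ 2 - 2 * (inner ℝ u (∑ i ∈ s, a i • P i) : ℝ)
        + ∑ i ∈ s, a i * ‖P i‖ ^ 2 := by
  have hq : ∀ i ∈ s, a i * ‖u - P i‖ ^ 2
      = a i * ‖u‖ ^ 2 - 2 * (a i * inner ℝ u (P i)) + a i * ‖P i‖ ^ 2 := by
    intro i _
    rw [norm_sub_sq_real]
    ring
  rw [Finset.sum_congr rfl hq, Finset.sum_add_distrib, Finset.sum_sub_distrib, ← Finset.sum_mul,
    inner_sum]
  simp only [real_inner_smul_right, Finset.mul_sum]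

/-- Lemma 2.2 of the paper: the stage functional equals the rewritten stage
functional up to an additive constant independent of `u`; in particular the two functionals
have the same minimizers. -/
theorem stmt_9 {H : Type*} [NormedAddCommGroup H] [InnerProductSpace ℝ H] [CompleteSpace H]
    (E₁ E₂ : H → ℝ) (g : H → H) (hgrad : ∀ x, HasGradientAt E₂ (g x) x)
    (k Λ : ℝ) (hk : 0 < k) (hΛ : 0 ≤ Λ)
    (M : ℕ) (hM : 1 ≤ M) (θ γ γt St : ℕ → ℕ → ℝ)
    (hSt : ∀ j m : ℕ, St j m = ∑ i ∈ Finset.range m, γt j i)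
    (hrec : ∀ m i : ℕ, 1 ≤ m → m ≤ M → i < m →
      γt m i = γ m i - k * Λ * θ m i - ∑ j ∈ Finset.Icc (m + 1) M, γt j i * (St j m / St j j))
    (hSjj : ∀ j : ℕ, 1 ≤ j → j ≤ M → St j j ≠ 0)
    (hSjm : ∀ m j : ℕ, 1 ≤ m → m ≤ j → j ≤ M → St j m ≠ 0)
    (hθsum : ∀ m : ℕ, 1 ≤ m → m ≤ M → ∑ i ∈ Finset.range m, θ m i = 1)
    (m : ℕ) (hm1 : 1 ≤ m) (hmM : m ≤ M) (U : ℕ → H) :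
    (∃ c : ℝ, ∀ u : H,
        stageFunc E₁ E₂ g k θ γ m U u = stageFuncAux E₁ E₂ g k Λ θ γt St M m U u + c) ∧
      (∀ v : H,
        (∀ u : H, stageFunc E₁ E₂ g k θ γ m U v ≤ stageFunc E₁ E₂ g k θ γ m U u) ↔
        (∀ u : H, stageFuncAux E₁ E₂ g k Λ θ γt St M m U v ≤
            stageFuncAux E₁ E₂ g k Λ θ γt St M m U u)) := by
  classical
  have hk' : k ≠ 0 := ne_of_gt hk
  have hmem : m ∉ Finset.Icc (m+1) M := by simp
  have hins : Finset.Icc m M = insert m (Finset.Icc (m+1) M) := by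
    ext x; simp only [Finset.mem_Icc, Finset.mem_insert]; omega
  -- fact 1 : the sum of the γ's
  have fact1 : (∑ i ∈ Finset.range m, γ m i)
      = k*Λ + ∑ j ∈ Finset.Icc m M, St j m ^ 2 / St j j := by
    have h := Finset.sum_congr rfl (fun i hi => hrec m i hm1 hmM (Finset.mem_range.mp hi))
    rw [Finset.sum_sub_distrib, Finset.sum_sub_distrib, ← Finset.mul_sum, hθsum m hm1 hmM,
      Finset.sum_comm, ← hSt] at h
    have h2 : ∀ j ∈ Finset.Icc (m+1) M, ∑ i ∈ Finset.range m, γt j i * (St j m / St j j)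
        = St j m ^2 / St j j := by
      intro j hj
      rw [← Finset.sum_mul, ← hSt]; ring
    rw [Finset.sum_congr rfl h2] at h
    rw [hins, Finset.sum_insert hmem]
    have hSmm := hSjj m hm1 hmM
    have : St m m ^ 2 / St m m = St m m := by field_simp
    rw [this]
    linarith [h]
  -- fact 2 : the corresponding vector identity
  have fact2 : (∑ i ∈ Finset.range m, γ m i • U i)
      = (k*Λ) • (∑ i ∈ Finset.range m, θ m i • U i)
        + ∑ j ∈ Finset.Icc m M, (St j m / St j j) • (∑ i ∈ Finset.range m, γt j i • U i) := by
    have h : (∑ i ∈ Finset.range m, γt m i • U i)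
        = (∑ i ∈ Finset.range m, γ m i • U i)
            - (k*Λ) • (∑ i ∈ Finset.range m, θ m i • U i)
            - ∑ j ∈ Finset.Icc (m+1) M,
                (St j m / St j j) • (∑ i ∈ Finset.range m, γt j i • U i) := by
      have hj : ∀ j ∈ Finset.Icc (m+1) M,
          (St j m / St j j) • (∑ i ∈ Finset.range m, γt j i • U i)
            = ∑ i ∈ Finset.range m, (γt j i * (St j m / St j j)) • U i := by
        intro j _
        rw [Finset.smul_sum]
        exact Finset.sum_congr rfl fun i _ => by rw [smul_smul, mul_comm]
      rw [Finset.sum_congr rfl hj, Finset.sum_comm, Finset.smul_sum,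
        ← Finset.sum_sub_distrib, ← Finset.sum_sub_distrib]
      refine Finset.sum_congr rfl fun i hi => ?_
      rw [hrec m i hm1 hmM (Finset.mem_range.mp hi), smul_smul, ← Finset.sum_smul,
        sub_smul, sub_smul]
    rw [hins, Finset.sum_insert hmem]
    have hSmm := hSjj m hm1 hmM
    rw [div_self hSmm, one_smul, h]
    abel
  -- the key pointwise identity
  set w : ℕ → H := fun j => ∑ i ∈ Finset.range m, (γt j i / St j m) • U i with hw
  set V : ℕ → H := fun j => ∑ i ∈ Finset.range m, γt j i • U i with hV
  set c : ℝ := (∑ i ∈ Finset.range m, γ m i / (2*k) * ‖U i‖ ^ 2)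
      - (∑ i ∈ Finset.range m, θ m i * (Λ / 2) * ‖U i‖ ^ 2)
      - 1 / (2*k) * ∑ j ∈ Finset.Icc m M, St j m ^ 2 / St j j * ‖w j‖ ^ 2 with hc
  have key : ∀ u : H,
      ∑ i ∈ Finset.range m, γ m i / (2*k) * ‖u - U i‖ ^ 2
        = (∑ i ∈ Finset.range m, θ m i * (Λ / 2 * ‖u - U i‖ ^ 2))
          + 1 / (2*k) * ∑ j ∈ Finset.Icc m M, St j m ^ 2 / St j j * ‖u - w j‖ ^ 2
          + c := by
    intro u
    simp only [← mul_assoc]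
    rw [sum_quad (Finset.range m) (fun i => γ m i / (2*k)) U u,
        sum_quad (Finset.range m) (fun i => θ m i * (Λ/2)) U u,
        sum_quad (Finset.Icc m M) (fun j => St j m ^ 2 / St j j) w u]
    have e1 : ∑ i ∈ Finset.range m, (γ m i / (2*k)) • U i
        = (2*k)⁻¹ • ∑ i ∈ Finset.range m, γ m i • U i := by
      rw [Finset.smul_sum]
      exact Finset.sum_congr rfl fun i _ => by rw [smul_smul, div_eq_inv_mul]
    have e2 : ∑ i ∈ Finset.range m, (θ m i * (Λ/2)) • U i
        = (Λ/2) • ∑ i ∈ Finset.range m, θ m i • U i := by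
      rw [Finset.smul_sum]
      exact Finset.sum_congr rfl fun i _ => by rw [smul_smul, mul_comm]
    have e3 : ∑ j ∈ Finset.Icc m M, (St j m ^ 2 / St j j) • w j
        = ∑ j ∈ Finset.Icc m M, (St j m / St j j) • V j := by
      refine Finset.sum_congr rfl fun j hj => ?_
      have hS : St j m ≠ 0 := hSjm m j hm1 (Finset.mem_Icc.mp hj).1 (Finset.mem_Icc.mp hj).2
      rw [hw, hV]
      simp only [Finset.smul_sum, smul_smul]
      refine Finset.sum_congr rfl fun i _ => ?_
      congr 1
      field_simp [hS]
    rw [e1, e2, e3, real_inner_smul_right, real_inner_smul_right]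
    have hp : (inner ℝ u (∑ i ∈ Finset.range m, γ m i • U i) : ℝ)
        = k*Λ * (inner ℝ u (∑ i ∈ Finset.range m, θ m i • U i) : ℝ)
          + (inner ℝ u (∑ j ∈ Finset.Icc m M, (St j m / St j j) • V j) : ℝ) := by
      rw [fact2, inner_add_right, real_inner_smul_right]
    have hsum1 : ∑ i ∈ Finset.range m, γ m i / (2*k)
        = (∑ i ∈ Finset.range m, γ m i) / (2*k) := (Finset.sum_div _ _ _).symm
    have hsum2 : ∑ i ∈ Finset.range m, θ m i * (Λ/2) = Λ/2 := by
      rw [← Finset.sum_mul, hθsum m hm1 hmM, one_mul]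
    rw [hsum1, hsum2, fact1, hp, hc]
    field_simp
    ring
  have main : ∀ u : H,
      stageFunc E₁ E₂ g k θ γ m U u = stageFuncAux E₁ E₂ g k Λ θ γt St M m U u + c := by
    intro u
    simp only [stageFunc, stageFuncAux, mul_add, Finset.sum_add_distrib, ← hw]
    linarith [key u]
  refine ⟨⟨c, main⟩, fun v => ⟨fun h u => ?_, fun h u => ?_⟩⟩
  · have := h u
    rw [main u, main v] at this
    linarith
  · have := h u
    rw [main u, main v]
    linarith
end

section
/- (Lemma 2.3 of the paper.) Let E₁, E₂ : H → ℝ with E₂ Fréchet differentiable, let k > 0 and Λ ≥ 0 such that the quadratic upper bound holds, let γ_{m,i}, θ_{m,i} be scheme coefficients with auxiliary quantities γ̃_{m,i}, S̃_{j,m}, and assume: S̃_{m,m} > 0 for m = 1,…,M; S̃_{j,m} ≠ 0 whenever the quotients γ̃_{j,i}/S̃_{j,m} appear; θ_{m,i} ≥ 0 and θ_{m−1,i} ≥ θ_{m,i} for all applicable indices; and Σ_{i=0}^{m−1} θ_{m,i} = 1 for each m. Fix 2 ≤ m ≤ M and U₀,…,U_{m−1} ∈ H, and let U_m be a global minimizer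 over H of u ↦ E₁(u) + Σ_{i=0}^{m−1} θ_{m,i} L₂(u,U_i) + Σ_{i=0}^{m−1} (γ_{m,i}/(2k))‖u − U_i‖². Then: E₁(U_m) + Σ_{i=0}^{m−1} θ_{m,i}[L₂(U_m,U_i) + (Λ/2)‖U_m − U_i‖²] + (1/(2k))Σ_{j=m}^{M} (S̃_{j,m}²/S̃_{j,j})‖U_m − Σ_{i=0}^{m−1}(γ̃_{j,i}/S̃_{j,m})U_i‖² ≤ E₁(U_{m−1}) + Σ_{i=0}^{m−2} θ_{m−1,i}[L₂(U_{m−1},U_i) + (Λ/2)‖U_{m−1} − U_i‖²] + (1/(2k))Σ_{j=m−1}^{M} (S̃_{j,m−1}²/S̃_{j,j})‖U_{m−1} − Σ_{i=0}^{m−2}(γ̃_{j,i}/S̃_{j,m−1})U_i‖². -/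
open Finset in
lemma quadExpand {H : Type*} [NormedAddCommGroup H] [InnerProductSpace ℝ H]
    (c : ℕ → ℝ) (m : ℕ) (u : H) (U : ℕ → H) :
    ‖(∑ i ∈ range m, c i) • u - ∑ i ∈ range m, c i • U i‖ ^ 2
      = (∑ i ∈ range m, c i) * ∑ i ∈ range m, c i * ‖u - U i‖ ^ 2
        - (∑ i ∈ range m, c i) * ∑ i ∈ range m, c i * ‖U i‖ ^ 2
        + ‖∑ i ∈ range m, c i • U i‖ ^ 2 := by
  have h1 : ∀ x y : H, ‖x - y‖ ^ 2 = ‖x‖ ^ 2 - 2 * inner ℝ x y + ‖y‖ ^ 2 := fun x y =>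
    norm_sub_sq_real x y
  rw [h1]
  have h2 : (inner ℝ ((∑ i ∈ range m, c i) • u) (∑ i ∈ range m, c i • U i) : ℝ)
      = (∑ i ∈ range m, c i) * ∑ i ∈ range m, c i * inner ℝ u (U i) := by
    rw [real_inner_smul_left, inner_sum]
    simp [real_inner_smul_right]
  have h3 : ∀ i, c i * ‖u - U i‖ ^ 2
      = c i * ‖u‖ ^ 2 - 2 * (c i * inner ℝ u (U i)) + c i * ‖U i‖ ^ 2 := by
    intro i; rw [h1]; ring
  rw [h2, norm_smul]
  simp only [h3, Finset.sum_add_distrib, Finset.sum_sub_distrib, ← Finset.sum_mul,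
    ← Finset.mul_sum]
  rw [Real.norm_eq_abs, mul_pow, sq_abs]
  ring

open Finset in
lemma auxEqQ {H : Type*} [NormedAddCommGroup H] [InnerProductSpace ℝ H]
    (E₁ E₂ : H → ℝ) (g : H → H) (k Λ : ℝ) (θ γt St : ℕ → ℕ → ℝ) (M m : ℕ)
    (U : ℕ → H) (u : H)
    (hSt : ∀ j, St j m = ∑ i ∈ Finset.range m, γt j i)
    (hne : ∀ j ∈ Finset.Icc m M, St j m ≠ 0) :
    stageFuncAux E₁ E₂ g k Λ θ γt St M m U u
      = E₁ u + ∑ i ∈ Finset.range m,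
          θ m i * ((E₂ (U i) + (inner ℝ (g (U i)) (u - U i) : ℝ)) + Λ / 2 * ‖u - U i‖ ^ 2)
        + 1 / (2 * k) * ∑ j ∈ Finset.Icc m M,
            (St j j)⁻¹ * ‖St j m • u - ∑ i ∈ Finset.range m, γt j i • U i‖ ^ 2 := by
  unfold stageFuncAux
  congr 2
  refine Finset.sum_congr rfl fun j hj => ?_
  have hS := hne j hj
  have hv : St j m • (u - ∑ i ∈ Finset.range m, (γt j i / St j m) • U i)
      = St j m • u - ∑ i ∈ Finset.range m, γt j i • U i := by
    rw [smul_sub, Finset.smul_sum]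
    congr 1
    refine Finset.sum_congr rfl fun i _ => ?_
    rw [smul_smul, mul_div_cancel₀ _ hS]
  rw [← hv, norm_smul, Real.norm_eq_abs, mul_pow, sq_abs]
  field_simp

open Finset in
lemma funcEqQ {H : Type*} [NormedAddCommGroup H] [InnerProductSpace ℝ H]
    (E₁ E₂ : H → ℝ) (g : H → H) (k Λ : ℝ) (hk : k ≠ 0)
    (θ γ γt St : ℕ → ℕ → ℝ) (M m : ℕ) (U : ℕ → H) (u : H) (hmM : m ≤ M)
    (hSt : ∀ j, St j m = ∑ i ∈ Finset.range m, γt j i)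
    (hmm : St m m ≠ 0)
    (hrecm : ∀ i < m, γ m i = γt m i + k * Λ * θ m i
        + ∑ j ∈ Finset.Icc (m + 1) M, γt j i * (St j m / St j j)) :
    stageFunc E₁ E₂ g k θ γ m U u
      = (E₁ u + ∑ i ∈ Finset.range m,
          θ m i * ((E₂ (U i) + (inner ℝ (g (U i)) (u - U i) : ℝ)) + Λ / 2 * ‖u - U i‖ ^ 2)
        + 1 / (2 * k) * ∑ j ∈ Finset.Icc m M,
            (St j j)⁻¹ * ‖St j m • u - ∑ i ∈ Finset.range m, γt j i • U i‖ ^ 2)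
        + 1 / (2 * k) * ∑ j ∈ Finset.Icc m M,
            (St j j)⁻¹ * (St j m * (∑ i ∈ Finset.range m, γt j i * ‖U i‖ ^ 2)
              - ‖∑ i ∈ Finset.range m, γt j i • U i‖ ^ 2) := by
  have hkey : ∀ j, (St j j)⁻¹ * ‖St j m • u - ∑ i ∈ Finset.range m, γt j i • U i‖ ^ 2
        + (St j j)⁻¹ * (St j m * (∑ i ∈ Finset.range m, γt j i * ‖U i‖ ^ 2)
            - ‖∑ i ∈ Finset.range m, γt j i • U i‖ ^ 2)
      = St j m / St j j * ∑ i ∈ Finset.range m, γt j i * ‖u - U i‖ ^ 2 := by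
    intro j
    have hQ := quadExpand (γt j) m u U
    rw [← hSt] at hQ
    rw [hQ]; ring
  -- main sum computation
  have hstar : ∑ i ∈ Finset.range m, γ m i * ‖u - U i‖ ^ 2
      = k * Λ * ∑ i ∈ Finset.range m, θ m i * ‖u - U i‖ ^ 2
        + ∑ j ∈ Finset.Icc m M,
            St j m / St j j * ∑ i ∈ Finset.range m, γt j i * ‖u - U i‖ ^ 2 := by
    have hins : Finset.Icc m M = insert m (Finset.Icc (m + 1) M) := by
      ext x; simp [Finset.mem_Icc, Finset.mem_insert]; omega
    rw [hins, Finset.sum_insert (by simp), div_self hmm, one_mul]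
    have h1 : ∑ i ∈ Finset.range m, γ m i * ‖u - U i‖ ^ 2
        = ∑ i ∈ Finset.range m, (γt m i * ‖u - U i‖ ^ 2
            + k * Λ * (θ m i * ‖u - U i‖ ^ 2)
            + ∑ j ∈ Finset.Icc (m + 1) M,
                St j m / St j j * (γt j i * ‖u - U i‖ ^ 2)) := by
      refine Finset.sum_congr rfl fun i hi => ?_
      rw [hrecm i (Finset.mem_range.mp hi), add_mul, add_mul, Finset.sum_mul]
      congr 1
      · ring
      exact Finset.sum_congr rfl fun j _ => by ring
    rw [h1]
    simp only [Finset.sum_add_distrib]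
    rw [Finset.sum_comm]
    have h5 : ∑ j ∈ Finset.Icc (m + 1) M, ∑ i ∈ Finset.range m,
          St j m / St j j * (γt j i * ‖u - U i‖ ^ 2)
        = ∑ j ∈ Finset.Icc (m + 1) M,
            St j m / St j j * ∑ i ∈ Finset.range m, γt j i * ‖u - U i‖ ^ 2 :=
      Finset.sum_congr rfl fun j _ => (Finset.mul_sum _ _ _).symm
    have h6 : ∑ i ∈ Finset.range m, k * Λ * (θ m i * ‖u - U i‖ ^ 2)
        = k * Λ * ∑ i ∈ Finset.range m, θ m i * ‖u - U i‖ ^ 2 :=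
      (Finset.mul_sum _ _ _).symm
    rw [h5, h6]
    ring
  unfold stageFunc
  have h2 : ∑ i ∈ Finset.range m, γ m i / (2 * k) * ‖u - U i‖ ^ 2
      = 1 / (2 * k) * ∑ i ∈ Finset.range m, γ m i * ‖u - U i‖ ^ 2 := by
    rw [Finset.mul_sum]; exact Finset.sum_congr rfl fun i _ => by ring
  rw [h2, hstar]
  have h3 : ∑ i ∈ Finset.range m,
        θ m i * ((E₂ (U i) + (inner ℝ (g (U i)) (u - U i) : ℝ)) + Λ / 2 * ‖u - U i‖ ^ 2)
      = ∑ i ∈ Finset.range m, θ m i * (E₂ (U i) + (inner ℝ (g (U i)) (u - U i) : ℝ))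
        + Λ / 2 * ∑ i ∈ Finset.range m, θ m i * ‖u - U i‖ ^ 2 := by
    rw [Finset.mul_sum, ← Finset.sum_add_distrib]
    exact Finset.sum_congr rfl fun i _ => by ring
  rw [h3]
  have h4 : ∑ j ∈ Finset.Icc m M,
        (St j j)⁻¹ * ‖St j m • u - ∑ i ∈ Finset.range m, γt j i • U i‖ ^ 2
      + ∑ j ∈ Finset.Icc m M,
        (St j j)⁻¹ * (St j m * (∑ i ∈ Finset.range m, γt j i * ‖U i‖ ^ 2)
          - ‖∑ i ∈ Finset.range m, γt j i • U i‖ ^ 2)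
      = ∑ j ∈ Finset.Icc m M,
          St j m / St j j * ∑ i ∈ Finset.range m, γt j i * ‖u - U i‖ ^ 2 := by
    rw [← Finset.sum_add_distrib]
    exact Finset.sum_congr rfl fun j _ => hkey j
  have hk2 : 1 / (2 * k) * (k * Λ * ∑ i ∈ Finset.range m, θ m i * ‖u - U i‖ ^ 2)
      = Λ / 2 * ∑ i ∈ Finset.range m, θ m i * ‖u - U i‖ ^ 2 := by
    field_simp
  rw [mul_add, hk2]
  rw [add_assoc, add_assoc, add_assoc]
  congr 1
  rw [← h4]
  ring
/-- Lemma 2.3 of the paper: if `U m` is a global minimizer of the `m`-th stage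
functional, then the rewritten stage functional decreases from stage `m − 1` to stage `m`. -/
theorem stmt_12 {H : Type*} [NormedAddCommGroup H] [InnerProductSpace ℝ H] [CompleteSpace H]
    (E₁ E₂ : H → ℝ) (g : H → H) (hgrad : ∀ x, HasGradientAt E₂ (g x) x)
    (k Λ : ℝ) (hk : 0 < k) (hΛ : 0 ≤ Λ)
    (hquad : ∀ u p : H, E₂ u ≤ E₂ p + (inner ℝ (g p) (u - p) : ℝ) + Λ / 2 * ‖u - p‖ ^ 2)
    (M : ℕ) (hM : 1 ≤ M) (θ γ γt St : ℕ → ℕ → ℝ)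
    (hSt : ∀ j m : ℕ, St j m = ∑ i ∈ Finset.range m, γt j i)
    (hrec : ∀ m i : ℕ, 1 ≤ m → m ≤ M → i < m →
      γt m i = γ m i - k * Λ * θ m i - ∑ j ∈ Finset.Icc (m + 1) M, γt j i * (St j m / St j j))
    (hSmm : ∀ m : ℕ, 1 ≤ m → m ≤ M → 0 < St m m)
    (hSjm : ∀ m j : ℕ, 1 ≤ m → m ≤ j → j ≤ M → St j m ≠ 0)
    (hθnonneg : ∀ m i : ℕ, 1 ≤ m → m ≤ M → i < m → 0 ≤ θ m i)
    (hθmono : ∀ m i : ℕ, 2 ≤ m → m ≤ M → i < m - 1 → θ m i ≤ θ (m - 1) i)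
    (hθsum : ∀ m : ℕ, 1 ≤ m → m ≤ M → ∑ i ∈ Finset.range m, θ m i = 1)
    (m : ℕ) (hm2 : 2 ≤ m) (hmM : m ≤ M) (U : ℕ → H)
    (hmin : ∀ u : H, stageFunc E₁ E₂ g k θ γ m U (U m) ≤ stageFunc E₁ E₂ g k θ γ m U u) :
    stageFuncAux E₁ E₂ g k Λ θ γt St M m U (U m) ≤
      stageFuncAux E₁ E₂ g k Λ θ γt St M (m - 1) U (U (m - 1)) := by
  have hk' : k ≠ 0 := ne_of_gt hk
  obtain ⟨n, rfl⟩ : ∃ n, n + 1 = m := ⟨m - 1, by omega⟩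
  simp only [Nat.add_sub_cancel]
  have hn1 : 1 ≤ n := by omega
  have hnM : n ≤ M := by omega
  -- the Q-form of the rewritten functional
  set G : ℕ → H → ℝ := fun m' v => E₁ v + ∑ i ∈ Finset.range m',
          θ m' i * ((E₂ (U i) + (inner ℝ (g (U i)) (v - U i) : ℝ)) + Λ / 2 * ‖v - U i‖ ^ 2)
        + 1 / (2 * k) * ∑ j ∈ Finset.Icc m' M,
            (St j j)⁻¹ * ‖St j m' • v - ∑ i ∈ Finset.range m', γt j i • U i‖ ^ 2 with hG
  have hauxm : ∀ v, stageFuncAux E₁ E₂ g k Λ θ γt St M (n + 1) U v = G (n + 1) v :=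
    fun v => auxEqQ E₁ E₂ g k Λ θ γt St M (n + 1) U v (fun j => hSt j (n + 1))
      (fun j hj => hSjm (n + 1) j (by omega) (Finset.mem_Icc.mp hj).1 (Finset.mem_Icc.mp hj).2)
  have hauxn : ∀ v, stageFuncAux E₁ E₂ g k Λ θ γt St M n U v = G n v :=
    fun v => auxEqQ E₁ E₂ g k Λ θ γt St M n U v (fun j => hSt j n)
      (fun j hj => hSjm n j hn1 (Finset.mem_Icc.mp hj).1 (Finset.mem_Icc.mp hj).2)
  have hrecm' : ∀ i < n + 1, γ (n + 1) i = γt (n + 1) i + k * Λ * θ (n + 1) i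
      + ∑ j ∈ Finset.Icc (n + 1 + 1) M, γt j i * (St j (n + 1) / St j j) := by
    intro i hi
    have := hrec (n + 1) i (by omega) hmM hi
    linarith
  have hmmne : St (n + 1) (n + 1) ≠ 0 := ne_of_gt (hSmm (n + 1) (by omega) hmM)
  -- step 1 : G (n+1) (U (n+1)) ≤ G (n+1) (U n), from minimality
  have hGm : G (n + 1) (U (n + 1)) ≤ G (n + 1) (U n) := by
    have h := hmin (U n)
    rw [funcEqQ E₁ E₂ g k Λ hk' θ γ γt St M (n + 1) U (U (n + 1)) hmM
        (fun j => hSt j (n + 1)) hmmne hrecm',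
      funcEqQ E₁ E₂ g k Λ hk' θ γ γt St M (n + 1) U (U n) hmM
        (fun j => hSt j (n + 1)) hmmne hrecm'] at h
    exact le_of_add_le_add_right h
  -- step 2 : G (n+1) (U n) ≤ G n (U n)
  have hGn : G (n + 1) (U n) ≤ G n (U n) := by
    rw [hG]
    simp only
    -- quadratic part
    have hXY : ∀ j, St j (n + 1) • U n - ∑ i ∈ Finset.range (n + 1), γt j i • U i
        = St j n • U n - ∑ i ∈ Finset.range n, γt j i • U i := by
      intro j
      have hSm : St j (n + 1) = St j n + γt j n := by
        rw [hSt j (n + 1), hSt j n, Finset.sum_range_succ]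
      rw [Finset.sum_range_succ, hSm, add_smul, add_sub_add_right_eq_sub]
    have hB : ∑ j ∈ Finset.Icc (n + 1) M,
          (St j j)⁻¹ * ‖St j (n + 1) • U n - ∑ i ∈ Finset.range (n + 1), γt j i • U i‖ ^ 2
        ≤ ∑ j ∈ Finset.Icc n M,
          (St j j)⁻¹ * ‖St j n • U n - ∑ i ∈ Finset.range n, γt j i • U i‖ ^ 2 := by
      have hins : Finset.Icc n M = insert n (Finset.Icc (n + 1) M) := by
        ext x; simp [Finset.mem_Icc, Finset.mem_insert]; omega
      rw [hins, Finset.sum_insert (by simp)]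
      have hcong : ∑ j ∈ Finset.Icc (n + 1) M,
            (St j j)⁻¹ * ‖St j (n + 1) • U n - ∑ i ∈ Finset.range (n + 1), γt j i • U i‖ ^ 2
          = ∑ j ∈ Finset.Icc (n + 1) M,
            (St j j)⁻¹ * ‖St j n • U n - ∑ i ∈ Finset.range n, γt j i • U i‖ ^ 2 :=
        Finset.sum_congr rfl fun j _ => by rw [hXY j]
      rw [hcong]
      refine le_add_of_nonneg_left (mul_nonneg ?_ (sq_nonneg _))
      exact inv_nonneg.mpr (hSmm n hn1 hnM).le
    -- θ part
    have hA : ∑ i ∈ Finset.range (n + 1),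
          θ (n + 1) i * ((E₂ (U i) + (inner ℝ (g (U i)) (U n - U i) : ℝ))
            + Λ / 2 * ‖U n - U i‖ ^ 2)
        ≤ ∑ i ∈ Finset.range n,
          θ n i * ((E₂ (U i) + (inner ℝ (g (U i)) (U n - U i) : ℝ))
            + Λ / 2 * ‖U n - U i‖ ^ 2) := by
      rw [Finset.sum_range_succ]
      have hTnn : (E₂ (U n) + (inner ℝ (g (U n)) (U n - U n) : ℝ))
          + Λ / 2 * ‖U n - U n‖ ^ 2 = E₂ (U n) := by simp
      rw [hTnn]
      have hsum : ∑ i ∈ Finset.range n, (θ n i - θ (n + 1) i) = θ (n + 1) n := by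
        have h1 := hθsum n hn1 hnM
        have h2 := hθsum (n + 1) (by omega) hmM
        rw [Finset.sum_range_succ] at h2
        rw [Finset.sum_sub_distrib, h1]
        linarith
      have hθd : ∀ i ∈ Finset.range n, 0 ≤ θ n i - θ (n + 1) i := by
        intro i hi
        have := hθmono (n + 1) i (by omega) hmM
          (by simpa using Finset.mem_range.mp hi)
        simp only [Nat.add_sub_cancel] at this
        linarith
      have hterm : ∀ i ∈ Finset.range n,
          (θ n i - θ (n + 1) i) * E₂ (U n)
            ≤ (θ n i - θ (n + 1) i) * ((E₂ (U i) + (inner ℝ (g (U i)) (U n - U i) : ℝ))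
                + Λ / 2 * ‖U n - U i‖ ^ 2) := by
        intro i hi
        exact mul_le_mul_of_nonneg_left (hquad (U n) (U i)) (hθd i hi)
      have hE : θ (n + 1) n * E₂ (U n)
          = ∑ i ∈ Finset.range n, (θ n i - θ (n + 1) i) * E₂ (U n) := by
        rw [← Finset.sum_mul, hsum]
      calc ∑ i ∈ Finset.range n,
            θ (n + 1) i * ((E₂ (U i) + (inner ℝ (g (U i)) (U n - U i) : ℝ))
              + Λ / 2 * ‖U n - U i‖ ^ 2) + θ (n + 1) n * E₂ (U n)
          ≤ ∑ i ∈ Finset.range n,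
            θ (n + 1) i * ((E₂ (U i) + (inner ℝ (g (U i)) (U n - U i) : ℝ))
              + Λ / 2 * ‖U n - U i‖ ^ 2)
            + ∑ i ∈ Finset.range n, (θ n i - θ (n + 1) i)
              * ((E₂ (U i) + (inner ℝ (g (U i)) (U n - U i) : ℝ))
                + Λ / 2 * ‖U n - U i‖ ^ 2) := by
            rw [hE]
            exact add_le_add_right (Finset.sum_le_sum hterm) _
        _ = ∑ i ∈ Finset.range n,
            θ n i * ((E₂ (U i) + (inner ℝ (g (U i)) (U n - U i) : ℝ))
              + Λ / 2 * ‖U n - U i‖ ^ 2) := by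
            rw [← Finset.sum_add_distrib]
            exact Finset.sum_congr rfl fun i _ => by ring
    refine add_le_add (add_le_add le_rfl hA) ?_
    exact mul_le_mul_of_nonneg_left hB (by positivity)
  rw [hauxm, hauxn]
  exact le_trans hGm hGn
end

section
/- (Theorem 2.1 of the paper: energy stability of the multistage ARK IMEX scheme.) Let E₁, E₂ : H → ℝ with E₂ Fréchet differentiable, let E = E₁ + E₂, let k > 0 and Λ ≥ 0 such that the quadratic upper bound holds, and let γ_{m,i}, θ_{m,i} (1 ≤ m ≤ M, 0 ≤ i ≤ m−1) be scheme coefficients with auxiliary quantities γ̃_{m,i}, S̃_{j,m}. Assume: S̃_{m,m} > 0 for m = 1,…,M; S̃_{j,m} ≠ 0 whenever the quotients γ̃_{j,i}/S̃_{j,m} appear; θ_{m,i} ≥ 0 and θ_{m−1,i} ≥ θ_{m,i} for all applicable i; and Σ_{i=0}^{m−1} θ_{m,i} = 1 for each m. Let U₀ ∈ H and, for m = 1,…,M, let U_m be a global minimizer over H of the stage functional u ↦ E₁(u) + Σ_{i=0}^{m−1} θ_{m,i} L₂(u,U_i) + Σ_{i=0}^{m−1} (γ_{m,i}/(2k))‖u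 − U_i‖². Then E(U_M) ≤ E(U₀). -/
open Finset


noncomputable def Qv {H : Type*} [NormedAddCommGroup H] [InnerProductSpace ℝ H]
    (γt : ℕ → ℕ → ℝ) (U : ℕ → H) (j m : ℕ) (u : H) : ℝ :=
  ∑ i ∈ Finset.range m, γt j i * ‖u - U i‖ ^ 2

noncomputable def cPt {H : Type*} [NormedAddCommGroup H] [InnerProductSpace ℝ H]
    (γt St : ℕ → ℕ → ℝ) (U : ℕ → H) (j m : ℕ) : H :=
  (St j m)⁻¹ • ∑ i ∈ Finset.range m, γt j i • U i

lemma variance_id {H : Type*} [NormedAddCommGroup H] [InnerProductSpace ℝ H]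
    (m : ℕ) (w : ℕ → ℝ) (V : ℕ → H) (s : ℝ) (hs : s = ∑ i ∈ range m, w i)
    (hs0 : s ≠ 0) (c : H) (hc : c = s⁻¹ • ∑ i ∈ range m, w i • V i) (u : H) :
    ∑ i ∈ range m, w i * ‖u - V i‖ ^ 2
      = s * ‖u - c‖ ^ 2 + ∑ i ∈ range m, w i * ‖c - V i‖ ^ 2 := by
  have hzero : (∑ i ∈ range m, w i • (c - V i)) = 0 := by
    have : (∑ i ∈ range m, w i • (c - V i))
        = (∑ i ∈ range m, w i) • c - ∑ i ∈ range m, w i • V i := by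
      rw [Finset.sum_smul]
      rw [← Finset.sum_sub_distrib]
      congr 1; ext i; rw [smul_sub]
    rw [this, ← hs, hc, smul_smul, mul_inv_cancel₀ hs0, one_smul, sub_self]
  have hterm : ∀ i ∈ range m, w i * ‖u - V i‖ ^ 2
      = w i * ‖u - c‖ ^ 2 + (2 * (inner ℝ (u - c) (w i • (c - V i)) : ℝ)
        + w i * ‖c - V i‖ ^ 2) := by
    intro i _
    have : u - V i = (u - c) + (c - V i) := by abel
    rw [this, norm_add_sq_real, real_inner_smul_right]
    ring
  rw [Finset.sum_congr rfl hterm, Finset.sum_add_distrib, Finset.sum_add_distrib,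
    ← Finset.mul_sum, ← Finset.sum_mul, ← inner_sum, hzero, inner_zero_right, ← hs]
  ring

lemma Qstep {H : Type*} [NormedAddCommGroup H] [InnerProductSpace ℝ H]
    (m : ℕ) (w : ℕ → ℝ) (V : ℕ → H)
    (a : ℝ) (ha : a = ∑ i ∈ range m, w i) (ha0 : a ≠ 0)
    (hb0 : a + w m ≠ 0)
    (c c' : H) (hc : c = a⁻¹ • ∑ i ∈ range m, w i • V i)
    (hc' : c' = (a + w m)⁻¹ • ∑ i ∈ range (m + 1), w i • V i) :
    (a + w m) * (∑ i ∈ range (m + 1), w i * ‖c' - V i‖ ^ 2)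
      = w m * (∑ i ∈ range m, w i * ‖V m - V i‖ ^ 2)
        + a * (∑ i ∈ range m, w i * ‖c - V i‖ ^ 2) := by
  have hs' : a + w m = ∑ i ∈ range (m + 1), w i := by
    rw [Finset.sum_range_succ, ← ha]
  have h2 := variance_id (m + 1) w V (a + w m) hs' hb0 c' hc' (V m)
  have h1 : ∑ i ∈ range (m + 1), w i * ‖V m - V i‖ ^ 2
      = ∑ i ∈ range m, w i * ‖V m - V i‖ ^ 2 := by
    rw [Finset.sum_range_succ, sub_self, norm_zero]
    ring
  have h4 := variance_id m w V a ha ha0 c hc (V m)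
  have h3 : (a + w m) • (V m - c') = a • (V m - c) := by
    rw [smul_sub, smul_sub, hc', hc, smul_smul, smul_smul,
      mul_inv_cancel₀ hb0, mul_inv_cancel₀ ha0, one_smul, one_smul,
      Finset.sum_range_succ]
    module
  have h3' : (a + w m) ^ 2 * ‖V m - c'‖ ^ 2 = a ^ 2 * ‖V m - c‖ ^ 2 := by
    have := congrArg (fun x : H => ‖x‖ ^ 2) h3
    simpa [norm_smul, mul_pow, sq_abs] using this
  linear_combination (-(a + w m)) * h2 + (a + w m) * h1 - h3' + a * h4

lemma Qstep' {H : Type*} [NormedAddCommGroup H] [InnerProductSpace ℝ H]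
    (M : ℕ) (γt St : ℕ → ℕ → ℝ) (U : ℕ → H)
    (hSt : ∀ j m : ℕ, St j m = ∑ i ∈ Finset.range m, γt j i)
    (hSjm : ∀ m j : ℕ, 1 ≤ m → m ≤ j → j ≤ M → St j m ≠ 0)
    (m j : ℕ) (hm1 : 1 ≤ m) (hj : m + 1 ≤ j) (hjM : j ≤ M) :
    St j (m + 1) / St j j * Qv γt U j (m + 1) (cPt γt St U j (m + 1))
      = γt j m / St j j * Qv γt U j m (U m)
        + St j m / St j j * Qv γt U j m (cPt γt St U j m) := by
  have hsucc : St j (m + 1) = St j m + γt j m := by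
    rw [hSt, hSt, Finset.sum_range_succ]
  have ha0 : St j m ≠ 0 := hSjm m j hm1 (by omega) hjM
  have hb0 : St j m + γt j m ≠ 0 := by
    rw [← hsucc]; exact hSjm (m + 1) j (by omega) hj hjM
  have key := Qstep m (γt j) U (St j m) (hSt j m) ha0 hb0
    (cPt γt St U j m) (cPt γt St U j (m + 1)) rfl
    (by rw [cPt, hsucc])
  rw [← hsucc] at key
  have : St j (m + 1) / St j j * Qv γt U j (m + 1) (cPt γt St U j (m + 1))
      = (St j (m + 1) * (∑ i ∈ range (m + 1), γt j i * ‖cPt γt St U j (m + 1) - U i‖ ^ 2)) / St j j := by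
    rw [Qv]; ring
  rw [this, key, Qv, Qv]
  ring

lemma claim_step {H : Type*} [NormedAddCommGroup H] [InnerProductSpace ℝ H]
    (E₁ E₂ : H → ℝ) (g : H → H) (k Λ : ℝ) (hk : 0 < k)
    (hquad : ∀ u p : H, E₂ u ≤ E₂ p + (inner ℝ (g p) (u - p) : ℝ) + Λ / 2 * ‖u - p‖ ^ 2)
    (M : ℕ) (θ γ γt St : ℕ → ℕ → ℝ)
    (hSt : ∀ j m : ℕ, St j m = ∑ i ∈ Finset.range m, γt j i)
    (hrec : ∀ m i : ℕ, 1 ≤ m → m ≤ M → i < m →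
      γt m i = γ m i - k * Λ * θ m i - ∑ j ∈ Finset.Icc (m + 1) M, γt j i * (St j m / St j j))
    (hSmm : ∀ m : ℕ, 1 ≤ m → m ≤ M → 0 < St m m)
    (hSjm : ∀ m j : ℕ, 1 ≤ m → m ≤ j → j ≤ M → St j m ≠ 0)
    (hθmono : ∀ m i : ℕ, 2 ≤ m → m ≤ M → i < m - 1 → θ m i ≤ θ (m - 1) i)
    (hθsum : ∀ m : ℕ, 1 ≤ m → m ≤ M → ∑ i ∈ Finset.range m, θ m i = 1)
    (U : ℕ → H)
    (m : ℕ) (hm1 : 1 ≤ m) (hmM : m < M)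
    (hminm : stageFunc E₁ E₂ g k θ γ (m + 1) U (U (m + 1))
      ≤ stageFunc E₁ E₂ g k θ γ (m + 1) U (U m))
    (ih : E₁ (U M) + E₂ (U M) ≤ stageFunc E₁ E₂ g k θ γ (m + 1) U (U (m + 1))
      - (2 * k)⁻¹ * ∑ j ∈ Finset.Icc (m + 1) M,
          St j (m + 1) / St j j * Qv γt U j (m + 1) (cPt γt St U j (m + 1))) :
    E₁ (U M) + E₂ (U M) ≤ stageFunc E₁ E₂ g k θ γ m U (U m)
      - (2 * k)⁻¹ * ∑ j ∈ Finset.Icc m M,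
          St j m / St j j * Qv γt U j m (cPt γt St U j m) := by
  have hk0 : k ≠ 0 := ne_of_gt hk
  have hc2 : (0:ℝ) ≤ (2 * k)⁻¹ := by positivity
  -- (C) expansion of the (m+1)-st functional at U m
  have hexp : stageFunc E₁ E₂ g k θ γ (m + 1) U (U m)
      = E₁ (U m) + (∑ i ∈ range m, θ (m + 1) i * (E₂ (U i) + (inner ℝ (g (U i)) (U m - U i) : ℝ))
          + θ (m + 1) m * E₂ (U m))
        + ∑ i ∈ range m, γ (m + 1) i / (2 * k) * ‖U m - U i‖ ^ 2 := by
    rw [stageFunc, Finset.sum_range_succ, Finset.sum_range_succ, sub_self,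
      inner_zero_right, norm_zero]
    ring
  -- θ-sum identity
  have hsum1 : ∑ i ∈ range m, (θ m i - θ (m + 1) i) = θ (m + 1) m := by
    have h1 := hθsum m hm1 (le_of_lt hmM)
    have h2 := hθsum (m + 1) (by omega) hmM
    rw [Finset.sum_range_succ] at h2
    rw [Finset.sum_sub_distrib, h1]
    linarith
  -- inner inequality (quadratic bound for the convexity defect)
  have hti : ∀ i ∈ range m,
      (θ m i - θ (m + 1) i) * (E₂ (U m) - Λ / 2 * ‖U m - U i‖ ^ 2)
        ≤ (θ m i - θ (m + 1) i) * (E₂ (U i) + (inner ℝ (g (U i)) (U m - U i) : ℝ)) := by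
    intro i hi
    have him : i < m := Finset.mem_range.mp hi
    have hmono := hθmono (m + 1) i (by omega) (by omega) (by omega)
    simp only [Nat.add_sub_cancel] at hmono
    have hq := hquad (U m) (U i)
    exact mul_le_mul_of_nonneg_left (by linarith) (by linarith)
  have hkey := Finset.sum_le_sum hti
  have hL1 : ∑ i ∈ range m, (θ m i - θ (m + 1) i) * (E₂ (U m) - Λ / 2 * ‖U m - U i‖ ^ 2)
      = θ (m + 1) m * E₂ (U m)
        - Λ / 2 * ∑ i ∈ range m, (θ m i - θ (m + 1) i) * ‖U m - U i‖ ^ 2 := by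
    calc ∑ i ∈ range m, (θ m i - θ (m + 1) i) * (E₂ (U m) - Λ / 2 * ‖U m - U i‖ ^ 2)
        = ∑ i ∈ range m, ((θ m i - θ (m + 1) i) * E₂ (U m)
            - Λ / 2 * ((θ m i - θ (m + 1) i) * ‖U m - U i‖ ^ 2)) :=
          Finset.sum_congr rfl fun i _ => by ring
      _ = _ := by
          rw [Finset.sum_sub_distrib, ← Finset.sum_mul, hsum1, ← Finset.mul_sum]
  have hL2 : ∑ i ∈ range m, (θ m i - θ (m + 1) i) * (E₂ (U i) + (inner ℝ (g (U i)) (U m - U i) : ℝ))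
      = ∑ i ∈ range m, θ m i * (E₂ (U i) + (inner ℝ (g (U i)) (U m - U i) : ℝ))
        - ∑ i ∈ range m, θ (m + 1) i * (E₂ (U i) + (inner ℝ (g (U i)) (U m - U i) : ℝ)) := by
    rw [← Finset.sum_sub_distrib]
    exact Finset.sum_congr rfl fun i _ => by ring
  have hinner : ∑ i ∈ range m, θ (m + 1) i * (E₂ (U i) + (inner ℝ (g (U i)) (U m - U i) : ℝ))
        + θ (m + 1) m * E₂ (U m)
      ≤ ∑ i ∈ range m, θ m i * (E₂ (U i) + (inner ℝ (g (U i)) (U m - U i) : ℝ))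
        + Λ / 2 * ∑ i ∈ range m, (θ m i - θ (m + 1) i) * ‖U m - U i‖ ^ 2 := by
    rw [hL1, hL2] at hkey
    linarith
  -- coefficient identity
  have hcoeff : ∀ i ∈ range m, γ (m + 1) i + k * Λ * (θ m i - θ (m + 1) i) - γ m i
      = -γt m i + ∑ j ∈ Finset.Icc (m + 1) M, γt j i * γt j m / St j j := by
    intro i hi
    have him : i < m := Finset.mem_range.mp hi
    have hrm := hrec m i hm1 (le_of_lt hmM) him
    have hrm1 := hrec (m + 1) i (by omega) hmM (by omega)
    have hdiag : St (m + 1) (m + 1) ≠ 0 := ne_of_gt (hSmm (m + 1) (by omega) hmM)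
    have hIccsplit : Finset.Icc (m + 1) M = insert (m + 1) (Finset.Icc (m + 2) M) := by
      ext x; simp only [Finset.mem_Icc, Finset.mem_insert]; omega
    have hsplit2 : ∑ j ∈ Finset.Icc (m + 1) M, γt j i * (St j (m + 1) / St j j)
        = γt (m + 1) i + ∑ j ∈ Finset.Icc (m + 2) M, γt j i * (St j (m + 1) / St j j) := by
      rw [hIccsplit, Finset.sum_insert (by simp only [Finset.mem_Icc]; omega),
        div_self hdiag, mul_one]
    have hsub : ∑ j ∈ Finset.Icc (m + 1) M, γt j i * γt j m / St j j
        = ∑ j ∈ Finset.Icc (m + 1) M, γt j i * (St j (m + 1) / St j j)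
          - ∑ j ∈ Finset.Icc (m + 1) M, γt j i * (St j m / St j j) := by
      rw [← Finset.sum_sub_distrib]
      refine Finset.sum_congr rfl fun j _ => ?_
      have hjm : γt j m = St j (m + 1) - St j m := by
        rw [hSt, hSt, Finset.sum_range_succ]; ring
      rw [hjm]; ring
    rw [hsub, hsplit2]
    linarith [hrm, hrm1]
  have hscalar : ∀ i ∈ range m,
      γ (m + 1) i / (2 * k) + Λ / 2 * (θ m i - θ (m + 1) i)
        = γ m i / (2 * k) - (2 * k)⁻¹ * γt m i
          + (2 * k)⁻¹ * ∑ j ∈ Finset.Icc (m + 1) M, γt j i * γt j m / St j j := by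
    intro i hi
    have h := hcoeff i hi
    have hhalf : k * (2 * k)⁻¹ = 1 / 2 := by field_simp
    linear_combination (2 * k)⁻¹ * h - Λ * (θ m i - θ (m + 1) i) * hhalf
  -- swap double sum
  have hsw : ∑ j ∈ Finset.Icc (m + 1) M,
        γt j m / St j j * ∑ i ∈ range m, γt j i * ‖U m - U i‖ ^ 2
      = ∑ i ∈ range m,
          (∑ j ∈ Finset.Icc (m + 1) M, γt j i * γt j m / St j j) * ‖U m - U i‖ ^ 2 := by
    calc ∑ j ∈ Finset.Icc (m + 1) M,
          γt j m / St j j * ∑ i ∈ range m, γt j i * ‖U m - U i‖ ^ 2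
        = ∑ j ∈ Finset.Icc (m + 1) M, ∑ i ∈ range m,
            γt j i * γt j m / St j j * ‖U m - U i‖ ^ 2 := by
          refine Finset.sum_congr rfl fun j _ => ?_
          rw [Finset.mul_sum]
          exact Finset.sum_congr rfl fun i _ => by ring
      _ = ∑ i ∈ range m, ∑ j ∈ Finset.Icc (m + 1) M,
            γt j i * γt j m / St j j * ‖U m - U i‖ ^ 2 := Finset.sum_comm
      _ = _ := Finset.sum_congr rfl fun i _ => by rw [Finset.sum_mul]
  -- (D)
  have hD : ∑ i ∈ range m, (γ (m + 1) i / (2 * k) + Λ / 2 * (θ m i - θ (m + 1) i)) * ‖U m - U i‖ ^ 2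
      = ∑ i ∈ range m, γ m i / (2 * k) * ‖U m - U i‖ ^ 2
        - (2 * k)⁻¹ * ∑ i ∈ range m, γt m i * ‖U m - U i‖ ^ 2
        + (2 * k)⁻¹ * ∑ j ∈ Finset.Icc (m + 1) M,
            γt j m / St j j * ∑ i ∈ range m, γt j i * ‖U m - U i‖ ^ 2 := by
    rw [hsw, Finset.mul_sum, Finset.mul_sum, ← Finset.sum_sub_distrib, ← Finset.sum_add_distrib]
    refine Finset.sum_congr rfl fun i hi => ?_
    rw [← mul_assoc ((2*k)⁻¹), ← mul_assoc ((2*k)⁻¹)]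
    linear_combination ‖U m - U i‖ ^ 2 * hscalar i hi
  have hDL : ∑ i ∈ range m, γ (m + 1) i / (2 * k) * ‖U m - U i‖ ^ 2
        + Λ / 2 * ∑ i ∈ range m, (θ m i - θ (m + 1) i) * ‖U m - U i‖ ^ 2
      = ∑ i ∈ range m, (γ (m + 1) i / (2 * k) + Λ / 2 * (θ m i - θ (m + 1) i)) * ‖U m - U i‖ ^ 2 := by
    rw [Finset.mul_sum, ← Finset.sum_add_distrib]
    exact Finset.sum_congr rfl fun i _ => by ring
  -- (F)
  have hF : ∑ j ∈ Finset.Icc (m + 1) M,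
        St j (m + 1) / St j j * Qv γt U j (m + 1) (cPt γt St U j (m + 1))
      = ∑ j ∈ Finset.Icc (m + 1) M, γt j m / St j j * Qv γt U j m (U m)
        + ∑ j ∈ Finset.Icc (m + 1) M, St j m / St j j * Qv γt U j m (cPt γt St U j m) := by
    rw [← Finset.sum_add_distrib]
    refine Finset.sum_congr rfl fun j hj => ?_
    have hj' := Finset.mem_Icc.mp hj
    exact Qstep' M γt St U hSt hSjm m j hm1 hj'.1 hj'.2
  simp only [Qv] at hF ih ⊢
  have hF' : (2 * k)⁻¹ * ∑ j ∈ Finset.Icc (m + 1) M,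
        St j (m + 1) / St j j * ∑ i ∈ range (m + 1), γt j i * ‖cPt γt St U j (m + 1) - U i‖ ^ 2
      = (2 * k)⁻¹ * ∑ j ∈ Finset.Icc (m + 1) M,
          γt j m / St j j * ∑ i ∈ range m, γt j i * ‖U m - U i‖ ^ 2
        + (2 * k)⁻¹ * ∑ j ∈ Finset.Icc (m + 1) M,
            St j m / St j j * ∑ i ∈ range m, γt j i * ‖cPt γt St U j m - U i‖ ^ 2 := by
    rw [hF, mul_add]
  -- (E)
  have hSmm' := hSmm m hm1 (le_of_lt hmM)
  have hvar := variance_id m (γt m) U (St m m) (hSt m m) (ne_of_gt hSmm')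
    (cPt γt St U m m) rfl (U m)
  have hE : ∑ i ∈ range m, γt m i * ‖cPt γt St U m m - U i‖ ^ 2
      ≤ ∑ i ∈ range m, γt m i * ‖U m - U i‖ ^ 2 := by
    rw [hvar]
    have : (0:ℝ) ≤ St m m * ‖U m - cPt γt St U m m‖ ^ 2 := by positivity
    linarith
  have hE' : (2 * k)⁻¹ * ∑ i ∈ range m, γt m i * ‖cPt γt St U m m - U i‖ ^ 2
      ≤ (2 * k)⁻¹ * ∑ i ∈ range m, γt m i * ‖U m - U i‖ ^ 2 :=
    mul_le_mul_of_nonneg_left hE hc2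
  -- split of the goal's Icc sum
  have hgs' : (2 * k)⁻¹ * ∑ j ∈ Finset.Icc m M,
        St j m / St j j * ∑ i ∈ range m, γt j i * ‖cPt γt St U j m - U i‖ ^ 2
      = (2 * k)⁻¹ * ∑ i ∈ range m, γt m i * ‖cPt γt St U m m - U i‖ ^ 2
        + (2 * k)⁻¹ * ∑ j ∈ Finset.Icc (m + 1) M,
            St j m / St j j * ∑ i ∈ range m, γt j i * ‖cPt γt St U j m - U i‖ ^ 2 := by
    have hIccsplit : Finset.Icc m M = insert m (Finset.Icc (m + 1) M) := by
      ext x; simp only [Finset.mem_Icc, Finset.mem_insert]; omega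
    rw [hIccsplit, Finset.sum_insert (by simp only [Finset.mem_Icc]; omega),
      div_self (ne_of_gt hSmm'), one_mul, mul_add]
  rw [stageFunc]
  rw [hexp] at hminm
  linarith [ih, hminm, hinner, hDL, hD, hF', hE', hgs']
lemma claim_base {H : Type*} [NormedAddCommGroup H] [InnerProductSpace ℝ H]
    (E₁ E₂ : H → ℝ) (g : H → H) (k Λ : ℝ) (hk : 0 < k)
    (hquad : ∀ u p : H, E₂ u ≤ E₂ p + (inner ℝ (g p) (u - p) : ℝ) + Λ / 2 * ‖u - p‖ ^ 2)
    (M : ℕ) (hM : 1 ≤ M) (θ γ γt St : ℕ → ℕ → ℝ)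
    (hSt : ∀ j m : ℕ, St j m = ∑ i ∈ Finset.range m, γt j i)
    (hrec : ∀ m i : ℕ, 1 ≤ m → m ≤ M → i < m →
      γt m i = γ m i - k * Λ * θ m i - ∑ j ∈ Finset.Icc (m + 1) M, γt j i * (St j m / St j j))
    (hSmm : ∀ m : ℕ, 1 ≤ m → m ≤ M → 0 < St m m)
    (hθnonneg : ∀ m i : ℕ, 1 ≤ m → m ≤ M → i < m → 0 ≤ θ m i)
    (hθsum : ∀ m : ℕ, 1 ≤ m → m ≤ M → ∑ i ∈ Finset.range m, θ m i = 1)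
    (U : ℕ → H) :
    E₁ (U M) + E₂ (U M) ≤ stageFunc E₁ E₂ g k θ γ M U (U M)
      - (2 * k)⁻¹ * ∑ j ∈ Finset.Icc M M, St j M / St j j * Qv γt U j M (cPt γt St U j M) := by
  have hSM := hSmm M hM le_rfl
  have hSM0 : St M M ≠ 0 := ne_of_gt hSM
  have hk2 : (0:ℝ) < (2 * k)⁻¹ := by positivity
  rw [Finset.Icc_self, Finset.sum_singleton, div_self hSM0, one_mul]
  have hvar := variance_id M (γt M) U (St M M) (hSt M M) hSM0 (cPt γt St U M M) rfl (U M)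
  have hQ : Qv γt U M M (cPt γt St U M M) ≤ ∑ i ∈ range M, γt M i * ‖U M - U i‖ ^ 2 := by
    rw [hvar]
    have : (0:ℝ) ≤ St M M * ‖U M - cPt γt St U M M‖ ^ 2 := by positivity
    unfold Qv
    linarith
  have hE2 : E₂ (U M) ≤ ∑ i ∈ range M, θ M i * (E₂ (U i) + (inner ℝ (g (U i)) (U M - U i) : ℝ))
      + Λ / 2 * ∑ i ∈ range M, θ M i * ‖U M - U i‖ ^ 2 := by
    have h1 : E₂ (U M) = ∑ i ∈ range M, θ M i * E₂ (U M) := by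
      rw [← Finset.sum_mul, hθsum M hM le_rfl, one_mul]
    have h2 : ∑ i ∈ range M, θ M i * E₂ (U M)
        ≤ ∑ i ∈ range M, θ M i * (E₂ (U i) + (inner ℝ (g (U i)) (U M - U i) : ℝ)
            + Λ / 2 * ‖U M - U i‖ ^ 2) :=
      Finset.sum_le_sum fun i hi => mul_le_mul_of_nonneg_left (hquad (U M) (U i))
        (hθnonneg M i hM le_rfl (Finset.mem_range.mp hi))
    have h3 : ∑ i ∈ range M, θ M i * (E₂ (U i) + (inner ℝ (g (U i)) (U M - U i) : ℝ)
            + Λ / 2 * ‖U M - U i‖ ^ 2)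
        = ∑ i ∈ range M, θ M i * (E₂ (U i) + (inner ℝ (g (U i)) (U M - U i) : ℝ))
          + Λ / 2 * ∑ i ∈ range M, θ M i * ‖U M - U i‖ ^ 2 := by
      rw [Finset.mul_sum, ← Finset.sum_add_distrib]
      exact Finset.sum_congr rfl fun i _ => by ring
    linarith [h1 ▸ h2, h3]
  have hγsplit : ∑ i ∈ range M, γ M i / (2 * k) * ‖U M - U i‖ ^ 2
      = Λ / 2 * ∑ i ∈ range M, θ M i * ‖U M - U i‖ ^ 2
        + (2 * k)⁻¹ * ∑ i ∈ range M, γt M i * ‖U M - U i‖ ^ 2 := by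
    rw [Finset.mul_sum, Finset.mul_sum, ← Finset.sum_add_distrib]
    refine Finset.sum_congr rfl fun i hi => ?_
    have h0 : γt M i = γ M i - k * Λ * θ M i := by
      have := hrec M i hM le_rfl (Finset.mem_range.mp hi)
      rwa [Finset.Icc_eq_empty (by omega), Finset.sum_empty, sub_zero] at this
    rw [h0]
    field_simp
    ring
  unfold stageFunc
  have hQ' : (2 * k)⁻¹ * Qv γt U M M (cPt γt St U M M)
      ≤ (2 * k)⁻¹ * ∑ i ∈ range M, γt M i * ‖U M - U i‖ ^ 2 :=
    mul_le_mul_of_nonneg_left hQ (le_of_lt hk2)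
  linarith [hE2, hγsplit, hQ']

/-- Theorem 2.1 of the paper: energy stability of the multistage ARK IMEX
scheme (2.1): if each stage `U m` (for `1 ≤ m ≤ M`) is a global minimizer of its stage
functional, then `E(U M) ≤ E(U 0)` where `E = E₁ + E₂`. -/
theorem stmt_13 {H : Type*} [NormedAddCommGroup H] [InnerProductSpace ℝ H] [CompleteSpace H]
    (E₁ E₂ : H → ℝ) (g : H → H) (hgrad : ∀ x, HasGradientAt E₂ (g x) x)
    (k Λ : ℝ) (hk : 0 < k) (hΛ : 0 ≤ Λ)
    (hquad : ∀ u p : H, E₂ u ≤ E₂ p + (inner ℝ (g p) (u - p) : ℝ) + Λ / 2 * ‖u - p‖ ^ 2)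
    (M : ℕ) (hM : 1 ≤ M) (θ γ γt St : ℕ → ℕ → ℝ)
    (hSt : ∀ j m : ℕ, St j m = ∑ i ∈ Finset.range m, γt j i)
    (hrec : ∀ m i : ℕ, 1 ≤ m → m ≤ M → i < m →
      γt m i = γ m i - k * Λ * θ m i - ∑ j ∈ Finset.Icc (m + 1) M, γt j i * (St j m / St j j))
    (hSmm : ∀ m : ℕ, 1 ≤ m → m ≤ M → 0 < St m m)
    (hSjm : ∀ m j : ℕ, 1 ≤ m → m ≤ j → j ≤ M → St j m ≠ 0)
    (hθnonneg : ∀ m i : ℕ, 1 ≤ m → m ≤ M → i < m → 0 ≤ θ m i)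
    (hθmono : ∀ m i : ℕ, 2 ≤ m → m ≤ M → i < m - 1 → θ m i ≤ θ (m - 1) i)
    (hθsum : ∀ m : ℕ, 1 ≤ m → m ≤ M → ∑ i ∈ Finset.range m, θ m i = 1)
    (U : ℕ → H)
    (hmin : ∀ m : ℕ, 1 ≤ m → m ≤ M →
      ∀ u : H, stageFunc E₁ E₂ g k θ γ m U (U m) ≤ stageFunc E₁ E₂ g k θ γ m U u) :
    E₁ (U M) + E₂ (U M) ≤ E₁ (U 0) + E₂ (U 0) := by
  have claim : ∀ t : ℕ, ∀ m : ℕ, 1 ≤ m → m ≤ M → M - m ≤ t →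
      E₁ (U M) + E₂ (U M) ≤ stageFunc E₁ E₂ g k θ γ m U (U m)
        - (2 * k)⁻¹ * ∑ j ∈ Finset.Icc m M,
            St j m / St j j * Qv γt U j m (cPt γt St U j m) := by
    intro t
    induction t with
    | zero =>
        intro m hm1 hmM ht
        have hmm : m = M := by omega
        subst hmm
        exact claim_base E₁ E₂ g k Λ hk hquad m hm1 θ γ γt St hSt hrec hSmm hθnonneg hθsum U
    | succ t iht =>
        intro m hm1 hmM ht
        rcases eq_or_lt_of_le hmM with h | h
        · subst h
          exact claim_base E₁ E₂ g k Λ hk hquad m hm1 θ γ γt St hSt hrec hSmm hθnonneg hθsum U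
        · exact claim_step E₁ E₂ g k Λ hk hquad M θ γ γt St hSt hrec hSmm hSjm hθmono hθsum U
            m hm1 h (hmin (m + 1) (by omega) h (U m)) (iht (m + 1) (by omega) h (by omega))
  have h1 := claim (M - 1) 1 le_rfl hM (by omega)
  have hzero : ∀ j ∈ Finset.Icc 1 M, St j 1 / St j j * Qv γt U j 1 (cPt γt St U j 1) = 0 := by
    intro j hj
    obtain ⟨hj1, hjM⟩ := Finset.mem_Icc.mp hj
    have hS1 : St j 1 = γt j 0 := by rw [hSt, Finset.sum_range_one]
    have hc : cPt γt St U j 1 = U 0 := by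
      rw [cPt, Finset.sum_range_one, hS1, smul_smul,
        inv_mul_cancel₀ (by rw [← hS1]; exact hSjm 1 j le_rfl hj1 hjM), one_smul]
    rw [Qv, Finset.sum_range_one, hc, sub_self, norm_zero]
    ring
  rw [Finset.sum_congr rfl hzero, Finset.sum_const_zero, mul_zero, sub_zero] at h1
  have h2 := hmin 1 le_rfl hM (U 0)
  have h3 : stageFunc E₁ E₂ g k θ γ 1 U (U 0) = E₁ (U 0) + E₂ (U 0) := by
    have hθ10 : θ 1 0 = 1 := by
      have := hθsum 1 le_rfl hM
      rwa [Finset.sum_range_one] at this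
    rw [stageFunc, Finset.sum_range_one, Finset.sum_range_one, sub_self,
      inner_zero_right, norm_zero, hθ10]
    ring
  rw [h3] at h2
  linarith [h1, h2]
end
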